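/- Let L be a finite meet-semilattice and G ⊆ L \ {0̂}. Then G is a building set of L if and only if: (a) every element of L \ {0̂} is a join of elements of G, and (b) for any x ∈ L, any pairwise distinct elements y, y₁, …, y_t of max G_{≤x}, and any z ∈ L with z < y, one has G_{≤y} ∩ G_{≤ z∨y₁∨…∨y_t} = G_{≤z}. -/

import Mathlib

attribute [local instance] Classical.propDecidable

universe u

/-- The set of maximal elements of `G` below `x`. -/
def maxBelow {L : Type u} [PartialOrder L] (G : Set L) (x : L) : Set L :=
  {g | g ∈ G ∧ g ≤ x ∧ ∀ h ∈ G, h ≤ x → g ≤ h → h = g}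

/-- The tuple in the product of lower intervals which is `g` in the coordinate
indexed by `g` and bottom elsewhere. -/
noncomputable def deltaTuple {L : Type u} [PartialOrder L] [OrderBot L] (G : Set L) (x : L)
    (g : maxBelow G x) : (h : maxBelow G x) → Set.Iic (h : L) :=
  fun h => if (h : L) = (g : L) then ⟨(h : L), le_refl _⟩ else ⟨⊥, bot_le⟩

/-- `G` is a (combinatorial) building set: `G` avoids the bottom element, and for every
`x ≠ ⊥` the interval `[⊥, x]` decomposes as the product of the intervals below the maximal
elements of `G` below `x`, via an isomorphism sending delta tuples to the corresponding
maximal elements. -/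
def IsBuilding {L : Type u} [PartialOrder L] [OrderBot L] (G : Set L) : Prop :=
  (∀ g ∈ G, g ≠ ⊥) ∧
  ∀ x : L, x ≠ ⊥ →
    ∃ φ : ((h : maxBelow G x) → Set.Iic (h : L)) ≃o Set.Iic x,
      ∀ g : maxBelow G x, ((φ (deltaTuple G x g) : Set.Iic x) : L) = (g : L)

section auxBuilding

set_option linter.unusedSectionVars false
set_option linter.unusedVariables false

variable {L : Type u} [SemilatticeInf L] [Fintype L] [OrderBot L]

private lemma exists_isLUB_aux (S : Set L) (u : L) (hu : u ∈ upperBounds S) : ∃ j, IsLUB S j := by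
  classical
  set U : Finset L := Finset.univ.filter (· ∈ upperBounds S) with hU
  have hne : U.Nonempty := ⟨u, by simp [hU, hu]⟩
  refine ⟨U.inf' hne id, ?_, ?_⟩
  · intro s hs
    exact Finset.le_inf' hne id fun v hv => (Finset.mem_filter.1 hv).2 hs
  · intro v hv
    exact Finset.inf'_le id (by simp [hU]; exact hv)


private lemma exists_maxBelow (G : Set L) (x g : L) (hg : g ∈ G) (hgx : g ≤ x) :
    ∃ h ∈ maxBelow G x, g ≤ h := by
  classical
  have hfin : ({h ∈ G | g ≤ h ∧ h ≤ x} : Set L).Finite := Set.toFinite _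
  obtain ⟨m, hm, hmax⟩ := Set.Finite.exists_maximalFor id _ hfin ⟨g, hg, le_refl g, hgx⟩
  exact ⟨m, ⟨hm.1, hm.2.2, fun h hh hhx hmh =>
    le_antisymm (hmax ⟨hh, le_trans hm.2.1 hmh, hhx⟩ hmh) hmh⟩, hm.2.1⟩


private lemma fwd_symm (G : Set L) (x : L)
    (φ : ((h : maxBelow G x) → Set.Iic (h : L)) ≃o Set.Iic x)
    (hφ : ∀ g : maxBelow G x, ((φ (deltaTuple G x g) : Set.Iic x) : L) = (g : L))
    (g : maxBelow G x) : φ.symm ⟨(g : L), g.2.2.1⟩ = deltaTuple G x g := by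
  have h1 : φ (deltaTuple G x g) = ⟨(g : L), g.2.2.1⟩ := Subtype.ext (hφ g)
  rw [← h1, OrderIso.symm_apply_apply]


private lemma fwd_a (G : Set L) (x : L)
    (φ : ((h : maxBelow G x) → Set.Iic (h : L)) ≃o Set.Iic x)
    (hφ : ∀ g : maxBelow G x, ((φ (deltaTuple G x g) : Set.Iic x) : L) = (g : L)) :
    ∃ S : Set L, S ⊆ G ∧ IsLUB S x := by
  refine ⟨maxBelow G x, fun s hs => hs.1, fun s hs => hs.2.1, ?_⟩
  intro u hu
  set w : L := x ⊓ u with hw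
  have hwx : w ≤ x := inf_le_left
  have hle : φ.symm ⟨x, le_refl x⟩ ≤ φ.symm ⟨w, hwx⟩ := by
    intro h
    have hhw : (h : L) ≤ w := le_inf h.2.2.1 (hu h.2)
    have h2 : φ.symm ⟨(h : L), h.2.2.1⟩ ≤ φ.symm ⟨w, hwx⟩ :=
      φ.symm.monotone (Subtype.mk_le_mk.mpr hhw)
    rw [fwd_symm G x φ hφ h] at h2
    have h3 := h2 h
    rw [deltaTuple, if_pos rfl] at h3
    have h4 : φ.symm ⟨x, le_refl x⟩ h ≤ ⟨(h : L), le_refl _⟩ :=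
      (φ.symm ⟨x, le_refl x⟩ h).2
    exact le_trans h4 h3
  have h5 : (⟨x, le_refl x⟩ : Set.Iic x) ≤ ⟨w, hwx⟩ := φ.symm.le_iff_le.mp hle
  exact le_trans (Subtype.mk_le_mk.mp h5) inf_le_right


private lemma fwd_b (G : Set L) (hG0 : ∀ g ∈ G, g ≠ ⊥)
    (x y : L) (hy : y ∈ maxBelow G x) (T : Finset L) (hT : ↑T ⊆ maxBelow G x)
    (hyT : y ∉ T) (z : L) (hz : z < y) (j : L) (hj : IsLUB (insert z (↑T : Set L)) j)
    (φ : ((h : maxBelow G x) → Set.Iic (h : L)) ≃o Set.Iic x)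
    (hφ : ∀ g : maxBelow G x, ((φ (deltaTuple G x g) : Set.Iic x) : L) = (g : L)) :
    {g ∈ G | g ≤ y} ∩ {g ∈ G | g ≤ j} = {g ∈ G | g ≤ z} := by
  set Y : maxBelow G x := ⟨y, hy⟩ with hYdef
  have hyx : y ≤ x := hy.2.1
  have hzx : z ≤ x := le_trans hz.le hyx
  -- support lemma
  have suppA : ∀ (w : L) (hwx : w ≤ x), w ≤ y → ∀ h : maxBelow G x, h ≠ Y →
      φ.symm ⟨w, hwx⟩ h = ⟨⊥, bot_le⟩ := by
    intro w hwx hwy h hne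
    have h1 : φ.symm ⟨w, hwx⟩ ≤ φ.symm ⟨(Y : L), Y.2.2.1⟩ :=
      φ.symm.monotone (Subtype.mk_le_mk.mpr hwy)
    rw [fwd_symm G x φ hφ Y] at h1
    have h3 := h1 h
    rw [deltaTuple, if_neg (fun e => hne (Subtype.ext e))] at h3
    exact le_antisymm h3 bot_le
  set cz : Set.Iic ((Y : maxBelow G x) : L) := φ.symm ⟨z, hzx⟩ Y with hcz
  -- monotonicity detected on coordinate Y
  have coordY : ∀ (w w' : L) (hwx : w ≤ x) (hw'x : w' ≤ x), w ≤ y → w' ≤ y →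
      φ.symm ⟨w, hwx⟩ Y ≤ φ.symm ⟨w', hw'x⟩ Y → w ≤ w' := by
    intro w w' hwx hw'x hwy hw'y hYle
    have hle : φ.symm ⟨w, hwx⟩ ≤ φ.symm ⟨w', hw'x⟩ := by
      intro h
      by_cases hh : h = Y
      · subst hh; exact hYle
      · rw [suppA w hwx hwy h hh]; exact bot_le
    exact Subtype.mk_le_mk.mp (φ.symm.le_iff_le.mp hle)
  -- the tuple q
  set q : (h : maxBelow G x) → Set.Iic (h : L) := fun h =>
    if hh : (h : L) = y then ⟨(cz : L), by rw [hh]; exact cz.2⟩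
    else if (h : L) ∈ T then ⟨(h : L), le_refl _⟩ else ⟨⊥, bot_le⟩ with hqdef
  have hqY : q Y = ⟨(cz : L), by exact cz.2⟩ := by
    rw [hqdef]; exact dif_pos rfl
  -- z ≤ φ q
  have hzq : z ≤ ((φ q : Set.Iic x) : L) := by
    have hle : φ.symm ⟨z, hzx⟩ ≤ q := by
      intro h
      by_cases hh : h = Y
      · subst hh
        rw [hqY]
      · rw [suppA z hzx hz.le h hh]; exact bot_le
    have := φ.monotone hle
    rw [OrderIso.apply_symm_apply] at this
    exact Subtype.mk_le_mk.mp this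
  -- t ≤ φ q for t ∈ T
  have htq : ∀ t ∈ T, t ≤ ((φ q : Set.Iic x) : L) := by
    intro t ht
    have htm : t ∈ maxBelow G x := hT ht
    set Ht : maxBelow G x := ⟨t, htm⟩ with hHt
    have hdle : deltaTuple G x Ht ≤ q := by
      intro h
      rw [deltaTuple]
      by_cases hh : (h : L) = (Ht : L)
      · have hmemT : (h : L) ∈ T := by rw [hh]; exact ht
        have hhy : ¬ (h : L) = y := fun e => hyT (by rw [← e]; exact hmemT)
        have hqh : q h = ⟨(h : L), le_refl _⟩ := by
          simp only [hqdef]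
          rw [dif_neg hhy, if_pos hmemT]
        rw [if_pos hh, hqh]
      · rw [if_neg hh]; exact bot_le
    have h2 : φ.symm ⟨t, htm.2.1⟩ = deltaTuple G x Ht := fwd_symm G x φ hφ Ht
    have h3 : φ.symm ⟨t, htm.2.1⟩ ≤ q := by rw [h2]; exact hdle
    have := φ.monotone h3
    rw [OrderIso.apply_symm_apply] at this
    exact Subtype.mk_le_mk.mp this
  -- φ q is the LUB
  have hlub : IsLUB (insert z (↑T : Set L)) ((φ q : Set.Iic x) : L) := by
    constructor
    · intro s hs
      rcases hs with rfl | hs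
      · exact hzq
      · exact htq s hs
    · intro u hu
      have hzu : z ≤ u := hu (Set.mem_insert _ _)
      set w : L := ((φ q : Set.Iic x) : L) ⊓ u with hwdef
      have hwx : w ≤ x := le_trans inf_le_left (φ q).2
      have hqle : q ≤ φ.symm ⟨w, hwx⟩ := by
        intro h
        by_cases hh : (h : L) = y
        · have hYh : h = Y := Subtype.ext hh
          subst hYh
          rw [hqY]
          have hzw : z ≤ w := le_inf hzq hzu
          have h2 : φ.symm ⟨z, hzx⟩ ≤ φ.symm ⟨w, hwx⟩ :=
            φ.symm.monotone (Subtype.mk_le_mk.mpr hzw)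
          exact le_trans (le_of_eq (Subtype.ext rfl)) (h2 Y)
        · by_cases ht : (h : L) ∈ T
          · have hhw : (h : L) ≤ w :=
              le_inf (htq _ ht) (hu (Set.mem_insert_of_mem _ ht))
            have h2 : φ.symm ⟨(h : L), h.2.2.1⟩ ≤ φ.symm ⟨w, hwx⟩ :=
              φ.symm.monotone (Subtype.mk_le_mk.mpr hhw)
            rw [fwd_symm G x φ hφ h] at h2
            have h3 := h2 h
            rw [deltaTuple, if_pos rfl] at h3
            have hqh : q h = ⟨(h : L), le_refl _⟩ := by
              simp only [hqdef]
              rw [dif_neg hh, if_pos ht]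
            rw [hqh]
            exact h3
          · have hqh : q h = ⟨⊥, bot_le⟩ := by
              simp only [hqdef]
              rw [dif_neg hh, if_neg ht]
            rw [hqh]
            exact bot_le
      have := φ.monotone hqle
      rw [OrderIso.apply_symm_apply] at this
      exact le_trans (Subtype.coe_le_coe.mpr this) inf_le_right
  have hjeq : j = ((φ q : Set.Iic x) : L) := hj.unique hlub
  have hjx : j ≤ x := by rw [hjeq]; exact (φ q).2
  -- conclude
  ext g
  simp only [Set.mem_inter_iff, Set.mem_sep_iff]
  constructor
  · rintro ⟨⟨hgG, hgy⟩, ⟨-, hgj⟩⟩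
    refine ⟨hgG, ?_⟩
    have hgx : g ≤ x := le_trans hgy hyx
    have h1 : φ.symm ⟨g, hgx⟩ ≤ φ.symm ⟨j, hjx⟩ :=
      φ.symm.monotone (Subtype.mk_le_mk.mpr hgj)
    have h2 : φ.symm ⟨j, hjx⟩ = q := by
      have : (⟨j, hjx⟩ : Set.Iic x) = φ q := Subtype.ext hjeq
      rw [this, OrderIso.symm_apply_apply]
    rw [h2] at h1
    have h3 := h1 Y
    rw [hqY] at h3
    have h4 : φ.symm ⟨g, hgx⟩ Y ≤ cz := le_trans h3 (le_of_eq (Subtype.ext rfl))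
    exact coordY g z hgx hzx hgy hz.le h4
  · rintro ⟨hgG, hgz⟩
    exact ⟨⟨hgG, le_trans hgz hz.le⟩, hgG, le_trans hgz (hj.1 (Set.mem_insert _ _))⟩


private lemma conv_main (G : Set L) (hG0 : ∀ g ∈ G, g ≠ ⊥)
    (ha : ∀ x : L, x ≠ ⊥ → ∃ S : Set L, S ⊆ G ∧ IsLUB S x)
    (hb : ∀ x : L, ∀ y ∈ maxBelow G x, ∀ T : Finset L, ↑T ⊆ maxBelow G x → y ∉ T →
          ∀ z : L, z < y → ∀ j : L, IsLUB (insert z (↑T : Set L)) j →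
            {g ∈ G | g ≤ y} ∩ {g ∈ G | g ≤ j} = {g ∈ G | g ≤ z})
    (x : L) (hx : x ≠ ⊥) :
    ∃ φ : ((h : maxBelow G x) → Set.Iic (h : L)) ≃o Set.Iic x,
      ∀ g : maxBelow G x, ((φ (deltaTuple G x g) : Set.Iic x) : L) = (g : L) := by
  classical
  -- key 1 : distinct maximal elements meet to ⊥
  have key1 : ∀ h h' : L, h ∈ maxBelow G x → h' ∈ maxBelow G x → h ≠ h' → h ⊓ h' = ⊥ := by
    intro h h' hm hm' hne
    have hlub' : IsLUB (insert (⊥ : L) ((↑({h'} : Finset L)) : Set L)) h' := by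
      constructor
      · intro s hs
        rcases hs with rfl | hs
        · exact bot_le
        · simp only [Finset.coe_singleton, Set.mem_singleton_iff] at hs
          exact le_of_eq hs
      · intro u hu
        exact hu (Set.mem_insert_of_mem _ (by simp))
    have htrace := hb x h hm ({h'} : Finset L)
      (by intro t ht; simp only [Finset.coe_singleton, Set.mem_singleton_iff] at ht;
          exact ht ▸ hm')
      (by simp [hne]) ⊥ (bot_lt_iff_ne_bot.mpr (hG0 h hm.1)) h' hlub'
    by_contra hne0
    obtain ⟨S, hSG, hS⟩ := ha _ hne0
    have hSempty : S = ∅ := by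
      rw [Set.eq_empty_iff_forall_notMem]
      intro g hg
      have hgle : g ≤ h ⊓ h' := hS.1 hg
      have : g ∈ {g ∈ G | g ≤ h} ∩ {g ∈ G | g ≤ h'} :=
        ⟨⟨hSG hg, le_trans hgle inf_le_left⟩, hSG hg, le_trans hgle inf_le_right⟩
      rw [htrace] at this
      exact hG0 g (hSG hg) (le_bot_iff.mp this.2)
    rw [hSempty] at hS
    exact hne0 (le_bot_iff.mp (hS.2 (fun s hs => hs.elim)))
  -- key 3 : order reflection
  have key3 : ∀ w w' : L, w ≤ x → (∀ h ∈ maxBelow G x, w ⊓ h ≤ w') → w ≤ w' := by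
    intro w w' hwx hcond
    by_cases hw : w = ⊥
    · subst hw; exact bot_le
    obtain ⟨S, hSG, hS⟩ := ha w hw
    refine hS.2 (fun s hs => ?_)
    obtain ⟨h, hm, hgh⟩ := exists_maxBelow G x s (hSG hs) (le_trans (hS.1 hs) hwx)
    exact le_trans (le_inf (hS.1 hs) hgh) (hcond h hm)
  -- key 4 : surjectivity data
  have key4 : ∀ u : (h : maxBelow G x) → Set.Iic (h : L),
      ∃ w : L, w ≤ x ∧ ∀ h : maxBelow G x, w ⊓ (h : L) = (u h : L) := by
    intro u
    set S : Set L := Set.range (fun h : maxBelow G x => (u h : L)) with hSdef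
    have hxub : x ∈ upperBounds S := by
      rintro s ⟨h, rfl⟩
      exact le_trans (u h).2 h.2.2.1
    obtain ⟨w, hw⟩ := exists_isLUB_aux S x hxub
    have hwx : w ≤ x := hw.2 hxub
    refine ⟨w, hwx, fun h => le_antisymm ?_ (le_inf (hw.1 ⟨h, rfl⟩) (u h).2)⟩
    by_cases heq : (u h : L) = (h : L)
    · rw [heq]; exact inf_le_right
    have hzy : (u h : L) < (h : L) := lt_of_le_of_ne (u h).2 heq
    set Tf : Finset L := ((Set.toFinite (maxBelow G x)).toFinset).erase (h : L) with hTf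
    have hTsub : ↑Tf ⊆ maxBelow G x := by
      intro t ht
      simp only [hTf, Finset.coe_erase, Set.mem_diff, Set.Finite.coe_toFinset] at ht
      exact ht.1
    have hyTf : (h : L) ∉ Tf := Finset.notMem_erase _ _
    have hub2 : x ∈ upperBounds (insert ((u h : L)) ((↑Tf) : Set L)) := by
      intro s hs
      rcases hs with rfl | hs
      · exact le_trans (u h).2 h.2.2.1
      · exact (hTsub hs).2.1
    obtain ⟨j, hj⟩ := exists_isLUB_aux _ x hub2
    have htrace := hb x (h : L) h.2 Tf hTsub hyTf (u h : L) hzy j hj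
    have hwj : w ≤ j := by
      refine hw.2 (fun s hs => ?_)
      obtain ⟨h', rfl⟩ := hs
      by_cases hh' : h' = h
      · subst hh'; exact hj.1 (Set.mem_insert _ _)
      · have hmem : (h' : L) ∈ Tf := by
          rw [hTf]
          refine Finset.mem_erase.mpr ⟨fun e => hh' (Subtype.ext e), ?_⟩
          rw [Set.Finite.mem_toFinset]
          exact h'.2
        exact le_trans (u h').2 (hj.1 (Set.mem_insert_of_mem _ hmem))
    by_cases h0 : w ⊓ (h : L) = ⊥
    · rw [h0]; exact bot_le
    obtain ⟨S', hS'G, hS'⟩ := ha _ h0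
    refine hS'.2 (fun s hs => ?_)
    have hsG := hS'G hs
    have hsle : s ≤ w ⊓ (h : L) := hS'.1 hs
    have hmem : s ∈ {g ∈ G | g ≤ (h : L)} ∩ {g ∈ G | g ≤ j} :=
      ⟨⟨hsG, le_trans hsle inf_le_right⟩, hsG, le_trans hsle (le_trans inf_le_left hwj)⟩
    rw [htrace] at hmem
    exact hmem.2
  -- build the order isomorphism
  set f : Set.Iic x → ((h : maxBelow G x) → Set.Iic (h : L)) :=
    fun w h => ⟨(w : L) ⊓ (h : L), inf_le_right⟩ with hfdef
  have fmono : ∀ a b : Set.Iic x, a ≤ b → f a ≤ f b := by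
    intro a b hab h
    exact Subtype.mk_le_mk.mpr (inf_le_inf_right _ (Subtype.coe_le_coe.mpr hab))
  have frefl : ∀ a b : Set.Iic x, f a ≤ f b → a ≤ b := by
    intro a b hab
    refine Subtype.coe_le_coe.mp (key3 (a : L) (b : L) a.2 (fun h hm => ?_))
    exact le_trans (Subtype.mk_le_mk.mp (hab ⟨h, hm⟩)) inf_le_left
  have finj : Function.Injective f := fun a b hab =>
    le_antisymm (frefl a b (le_of_eq hab)) (frefl b a (le_of_eq hab.symm))
  have fsurj : Function.Surjective f := by
    intro u
    obtain ⟨w, hwx, hwu⟩ := key4 u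
    exact ⟨⟨w, hwx⟩, funext fun h => Subtype.ext (hwu h)⟩
  set e : Set.Iic x ≃ ((h : maxBelow G x) → Set.Iic (h : L)) :=
    Equiv.ofBijective f ⟨finj, fsurj⟩ with hedef
  have hecoe : ∀ a, e a = f a := fun a => rfl
  set iso : Set.Iic x ≃o ((h : maxBelow G x) → Set.Iic (h : L)) :=
    { toEquiv := e, map_rel_iff' := fun {a b} => ⟨frefl a b, fmono a b⟩ } with hisodef
  refine ⟨iso.symm, fun g => ?_⟩
  have hdelta : f ⟨(g : L), g.2.2.1⟩ = deltaTuple G x g := by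
    funext h
    rw [deltaTuple]
    by_cases hh : (h : L) = (g : L)
    · rw [if_pos hh]
      exact Subtype.ext (by simp only [hfdef]; rw [hh, inf_idem])
    · rw [if_neg hh]
      exact Subtype.ext (by
        simp only [hfdef]
        rw [inf_comm]
        exact key1 (h : L) (g : L) h.2 g.2 (fun e => hh e) ▸ rfl)
  have : iso.symm (deltaTuple G x g) = ⟨(g : L), g.2.2.1⟩ := by
    rw [← hdelta]
    exact iso.symm_apply_apply _
  rw [OrderIso.symm_apply_eq] at this
  rw [← hdelta]
  have h2 : iso.symm (f ⟨(g : L), g.2.2.1⟩) = ⟨(g : L), g.2.2.1⟩ := by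
    have h3 : iso ⟨(g : L), g.2.2.1⟩ = f ⟨(g : L), g.2.2.1⟩ := rfl
    rw [← h3, OrderIso.symm_apply_apply]
  rw [h2]


end auxBuilding

/-- characterization of building sets, Proposition 2.3 (3). -/
theorem isBuilding_iff_join_generates_and_trace_condition {L : Type u} [SemilatticeInf L]
    [Fintype L] [OrderBot L] (G : Set L) (hG0 : ∀ g ∈ G, g ≠ ⊥) :
    IsBuilding G ↔
      ((∀ x : L, x ≠ ⊥ → ∃ S : Set L, S ⊆ G ∧ IsLUB S x) ∧
       (∀ x : L, ∀ y ∈ maxBelow G x, ∀ T : Finset L, ↑T ⊆ maxBelow G x → y ∉ T →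
          ∀ z : L, z < y → ∀ j : L, IsLUB (insert z (↑T : Set L)) j →
            {g ∈ G | g ≤ y} ∩ {g ∈ G | g ≤ j} = {g ∈ G | g ≤ z})) := by
  constructor
  · rintro ⟨-, hbuild⟩
    constructor
    · intro x hx
      obtain ⟨φ, hφ⟩ := hbuild x hx
      exact fwd_a G x φ hφ
    · intro x y hy T hT hyT z hz j hj
      have hx : x ≠ ⊥ := by
        intro e; subst e
        exact hG0 y hy.1 (le_bot_iff.mp hy.2.1)
      obtain ⟨φ, hφ⟩ := hbuild x hx
      exact fwd_b G hG0 x y hy T hT hyT z hz j hj φ hφ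
  · rintro ⟨ha, hb⟩
    exact ⟨hG0, conv_main G hG0 ha hb⟩
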